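/- arXiv:1608.06095 — 5 statements merged into one kernel-verified Lean document; each statement's English description precedes it below -/
import Mathlib

section
/- Let G and H be topological groups, U ⊆ G and V ⊆ H open subsets, and E a locally convex space. If f : U × V → E is a C^{1,1}-map, then for all (x,y) ∈ U × V, γ ∈ 𝔏(G) and η ∈ 𝔏(H), the iterated derivative (D_{(0,η)}D_{(γ,0)}f)(x,y) exists and equals (D_{(γ,0)}D_{(0,η)}f)(x,y). -/
open Filter Topology Set

set_option maxHeartbeats 1000000

section Auxiliary

variable {E : Type*} [AddCommGroup E] [Module ℝ E] [TopologicalSpace E]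
  [IsTopologicalAddGroup E] [ContinuousSMul ℝ E]

/-- Continuity at a point from existence of a (two-sided) directional derivative. -/
lemma contAt_of_dd {k : ℝ → E} {v : E} {σ : ℝ}
    (h : Tendsto (fun τ : ℝ => τ⁻¹ • (k (σ + τ) - k σ)) (𝓝[≠] 0) (𝓝 v)) :
    ContinuousAt k σ := by
  have hid : Tendsto (fun τ : ℝ => τ) (𝓝[≠] (0:ℝ)) (𝓝 0) :=
    tendsto_id.mono_left nhdsWithin_le_nhds
  have hs : Tendsto (fun τ : ℝ => τ • (τ⁻¹ • (k (σ + τ) - k σ))) (𝓝[≠] 0)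
      (𝓝 ((0:ℝ) • v)) := hid.smul h
  rw [zero_smul] at hs
  have hs' : Tendsto (fun τ : ℝ => k (σ + τ) - k σ) (𝓝[≠] 0) (𝓝 0) := by
    refine hs.congr' ?_
    filter_upwards [self_mem_nhdsWithin] with τ (hτ : τ ≠ 0)
    rw [smul_inv_smul₀ hτ]
  have h1 : Tendsto (fun τ : ℝ => k (σ + τ)) (𝓝[≠] 0) (𝓝 (k σ)) := by
    have := hs'.add (tendsto_const_nhds (x := k σ))
    simpa using this
  have h2 : Tendsto (fun τ : ℝ => k (σ + τ)) (𝓝 0) (𝓝 (k σ)) := by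
    rw [← nhdsNE_sup_pure (0:ℝ), tendsto_sup]
    exact ⟨h1, by simpa using tendsto_pure_nhds (fun τ : ℝ => k (σ + τ)) 0⟩
  have h3 : Tendsto (fun z : ℝ => z - σ) (𝓝 σ) (𝓝 0) := by
    simpa using (continuous_sub_right σ).tendsto σ
  have h4 := h2.comp h3
  simp only [Function.comp_def] at h4
  simpa [ContinuousAt] using h4

/-- Seminorm mean value inequality on `[a,b]`. -/
lemma smvt_base (p : Seminorm ℝ E) (hp : Continuous p) {k k' : ℝ → E} {a b M : ℝ}
    (hab : a ≤ b)
    (hd : ∀ σ ∈ Icc a b, Tendsto (fun τ : ℝ => τ⁻¹ • (k (σ + τ) - k σ)) (𝓝[≠] 0) (𝓝 (k' σ)))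
    (hM : ∀ σ ∈ Icc a b, p (k' σ) ≤ M) :
    p (k b - k a) ≤ M * (b - a) := by
  set φ : ℝ → ℝ := fun σ => p (k σ - k a) with hφdef
  have hk : ∀ σ ∈ Icc a b, ContinuousAt k σ := fun σ hσ => contAt_of_dd (hd σ hσ)
  have hφ : ContinuousOn φ (Icc a b) := fun σ hσ =>
    (hp.continuousAt.comp ((hk σ hσ).sub continuousAt_const)).continuousWithinAt
  have key : ∀ z ∈ Icc a b, φ z ≤ M * (z - a) := by
    refine image_le_of_liminf_slope_right_le_deriv_boundary (B := fun σ => M * (σ - a))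
      (B' := fun _ => M) hφ (by simp [φ]) ?_ ?_ ?_
    · exact (continuousOn_const.mul (continuousOn_id.sub continuousOn_const))
    · intro σ hσ
      simpa using ((hasDerivWithinAt_id σ (Ici σ)).sub_const a).const_mul M
    · intro σ hσ r hr
      have hσ' : σ ∈ Icc a b := Ico_subset_Icc_self hσ
      have hmap : Tendsto (fun z : ℝ => z - σ) (𝓝[>] σ) (𝓝[≠] (0:ℝ)) := by
        rw [tendsto_nhdsWithin_iff]
        constructor
        · simpa using ((continuous_sub_right σ).tendsto σ).mono_left
            nhdsWithin_le_nhds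
        · filter_upwards [self_mem_nhdsWithin] with z hz
          exact sub_ne_zero.2 (ne_of_gt hz)
      have h3 : Tendsto (fun z : ℝ => (z - σ)⁻¹ • (k z - k σ)) (𝓝[>] σ) (𝓝 (k' σ)) := by
        have := (hd σ hσ').comp hmap
        refine this.congr fun z => ?_
        simp [Function.comp]
      have h4 : Tendsto (fun z : ℝ => p ((z - σ)⁻¹ • (k z - k σ))) (𝓝[>] σ) (𝓝 (p (k' σ))) :=
        (hp.tendsto _).comp h3
      have hev : ∀ᶠ z in 𝓝[>] σ, p ((z - σ)⁻¹ • (k z - k σ)) < r :=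
        h4.eventually_lt_const (lt_of_le_of_lt (hM σ hσ') hr)
      refine ((hev.and self_mem_nhdsWithin).mono ?_).frequently
      rintro z ⟨hzr, (hz : σ < z)⟩
      have h5 : φ z - φ σ ≤ p (k z - k σ) := by
        have := map_add_le_add p (k z - k σ) (k σ - k a)
        simp only [sub_add_sub_cancel] at this
        simp only [φ]
        linarith
      have h6 : p (k z - k σ) / (z - σ) = p ((z - σ)⁻¹ • (k z - k σ)) := by
        rw [map_smul_eq_mul, Real.norm_eq_abs, abs_of_pos (inv_pos.2 (sub_pos.2 hz)),
          inv_mul_eq_div]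
      calc slope φ σ z = (φ z - φ σ) / (z - σ) := slope_def_field φ σ z
        _ ≤ p (k z - k σ) / (z - σ) := by gcongr
        _ < r := by rw [h6]; exact hzr
  have := key b (right_mem_Icc.2 hab)
  simpa [φ] using this

private lemma abs_le_of_mem_uIcc {c τ : ℝ} (h : τ ∈ uIcc (0:ℝ) c) : |τ| ≤ |c| := by
  rw [mem_uIcc] at h
  rcases h with ⟨h1, h2⟩ | ⟨h1, h2⟩ <;>
    refine abs_le.2 ⟨?_, ?_⟩ <;>
    [skip; skip; skip; skip] <;>
    first
      | linarith [le_abs_self c, neg_abs_le c]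

/-- Seminorm mean value inequality with a reference vector `w`, on `uIcc 0 b`. -/
lemma smvt (p : Seminorm ℝ E) (hp : Continuous p) {k k' : ℝ → E} {b M : ℝ} {w : E}
    (hd : ∀ σ ∈ uIcc (0:ℝ) b,
      Tendsto (fun τ : ℝ => τ⁻¹ • (k (σ + τ) - k σ)) (𝓝[≠] 0) (𝓝 (k' σ)))
    (hM : ∀ σ ∈ uIcc (0:ℝ) b, p (k' σ - w) ≤ M) :
    p (k b - k 0 - b • w) ≤ M * |b| := by
  set K : ℝ → E := fun σ => k σ - σ • w with hK
  have hdK : ∀ σ ∈ uIcc (0:ℝ) b,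
      Tendsto (fun τ : ℝ => τ⁻¹ • (K (σ + τ) - K σ)) (𝓝[≠] 0) (𝓝 (k' σ - w)) := by
    intro σ hσ
    have h0 := (hd σ hσ).sub (tendsto_const_nhds (x := w))
    refine h0.congr' ?_
    filter_upwards [self_mem_nhdsWithin] with τ (hτ : τ ≠ 0)
    have h1 : K (σ + τ) - K σ = (k (σ + τ) - k σ) - τ • w := by
      simp only [K, add_smul]; abel
    have h2 : τ⁻¹ • (K (σ + τ) - K σ) = τ⁻¹ • (k (σ + τ) - k σ) - w := by
      rw [h1, smul_sub, smul_smul, inv_mul_cancel₀ hτ, one_smul]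
    exact h2.symm
  have hKb : K b - K 0 = k b - k 0 - b • w := by simp only [K, zero_smul, sub_zero]; abel
  rcases le_total 0 b with hb | hb
  · have h := smvt_base p hp hb
      (fun σ hσ => hdK σ (by rwa [uIcc_of_le hb]))
      (fun σ hσ => hM σ (by rwa [uIcc_of_le hb]))
    rw [hKb, sub_zero] at h
    rwa [abs_of_nonneg hb]
  · have h := smvt_base p hp hb
      (fun σ hσ => hdK σ (by rwa [uIcc_of_ge hb]))
      (fun σ hσ => hM σ (by rwa [uIcc_of_ge hb]))
    rw [zero_sub] at h
    have h2 : p (K b - K 0) = p (K 0 - K b) := by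
      rw [← map_neg_eq_map p (K 0 - K b), neg_sub]
    rw [← hKb, h2, abs_of_nonpos hb]
    exact h

/-- Schwarz-type theorem for two real variables with values in a locally convex space. -/
lemma real_schwarz [LocallyConvexSpace ℝ E]
    {g gs gt gts : ℝ → ℝ → E} {δ₀ : ℝ} (hδ₀ : 0 < δ₀)
    (hGs : ∀ s t : ℝ, |s| < δ₀ → |t| < δ₀ →
      Tendsto (fun σ : ℝ => σ⁻¹ • (g (s + σ) t - g s t)) (𝓝[≠] 0) (𝓝 (gs s t)))
    (hGt : ∀ s t : ℝ, |s| < δ₀ → |t| < δ₀ →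
      Tendsto (fun τ : ℝ => τ⁻¹ • (g s (t + τ) - g s t)) (𝓝[≠] 0) (𝓝 (gt s t)))
    (hGts : ∀ s t : ℝ, |s| < δ₀ → |t| < δ₀ →
      Tendsto (fun σ : ℝ => σ⁻¹ • (gt (s + σ) t - gt s t)) (𝓝[≠] 0) (𝓝 (gts s t)))
    (hcont : ContinuousAt (fun q : ℝ × ℝ => gts q.1 q.2) (0, 0)) :
    Tendsto (fun t : ℝ => t⁻¹ • (gs 0 t - gs 0 0)) (𝓝[≠] 0) (𝓝 (gts 0 0)) := by
  rw [(with_gaugeSeminormFamily (𝕜 := ℝ) (E := E)).tendsto_nhds]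
  intro i ε hε
  set p := gaugeSeminormFamily ℝ E i with hpdef
  have hp : Continuous p := (with_gaugeSeminormFamily (𝕜 := ℝ) (E := E)).continuous_seminorm i
  set w := gts 0 0 with hw
  have hO : IsOpen {v : E | p (v - w) < ε / 2} :=
    isOpen_lt (hp.comp (continuous_id.sub continuous_const)) continuous_const
  have hev : ∀ᶠ q : ℝ × ℝ in 𝓝 (0, 0), p (gts q.1 q.2 - w) < ε / 2 := by
    refine hcont (hO.mem_nhds ?_)
    simp only [mem_setOf_eq, ← hw, sub_self, map_zero]
    positivity
  rcases Metric.eventually_nhds_iff_ball.mp hev with ⟨δ₁, hδ₁, hδball⟩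
  set δ := min δ₀ δ₁ with hδdef
  have hδpos : 0 < δ := lt_min hδ₀ hδ₁
  have hδle : ∀ a : ℝ, |a| < δ → |a| < δ₀ := fun a h => h.trans_le (min_le_left _ _)
  have hP : ∀ σ τ : ℝ, |σ| < δ → |τ| < δ → p (gts σ τ - w) < ε / 2 := by
    intro σ τ hσ hτ
    refine hδball (σ, τ) ?_
    rw [Metric.mem_ball, Prod.dist_eq]
    refine max_lt ?_ ?_ <;> rw [Real.dist_eq, sub_zero]
    · exact hσ.trans_le (min_le_right _ _)
    · exact hτ.trans_le (min_le_right _ _)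
  have h0δ : |(0:ℝ)| < δ := by simpa using hδpos
  have hsmall : ∀ᶠ u : ℝ in 𝓝[≠] 0, |u| < δ := by
    apply eventually_nhdsWithin_of_eventually_nhds
    filter_upwards [Metric.ball_mem_nhds (0:ℝ) hδpos] with u hu
    simpa [Real.dist_eq] using hu
  filter_upwards [self_mem_nhdsWithin, hsmall] with t (ht0 : t ≠ 0) (htδ : |t| < δ)
  have htδ₀ := hδle t htδ
  suffices h : p (t⁻¹ • (gs 0 t - gs 0 0) - w) ≤ ε / 2 by linarith
  -- key estimate via two nested mean value inequalities
  have key : ∀ s : ℝ, |s| < δ →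
      p ((g s t - g 0 t - (g s 0 - g 0 0)) - t • s • w) ≤ ε / 2 * |s| * |t| := by
    intro s hs
    have hsδ₀ := hδle s hs
    have inner : ∀ τ ∈ uIcc (0:ℝ) t, p ((gt s τ - gt 0 τ) - s • w) ≤ ε / 2 * |s| := by
      intro τ hτ
      have hτδ : |τ| < δ := (abs_le_of_mem_uIcc hτ).trans_lt htδ
      exact smvt p hp (k := fun σ => gt σ τ) (k' := fun σ => gts σ τ)
        (fun σ hσ => hGts σ τ (hδle σ ((abs_le_of_mem_uIcc hσ).trans_lt hs)) (hδle τ hτδ))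
        (fun σ hσ => (hP σ τ ((abs_le_of_mem_uIcc hσ).trans_lt hs) hτδ).le)
    have houter := smvt p hp (k := fun τ => g s τ - g 0 τ)
      (k' := fun τ => gt s τ - gt 0 τ) (b := t) (w := s • w) (M := ε / 2 * |s|)
      (fun τ hτ => by
        have hτδ₀ := hδle τ ((abs_le_of_mem_uIcc hτ).trans_lt htδ)
        refine ((hGt s τ hsδ₀ hτδ₀).sub (hGt 0 τ (hδle 0 h0δ) hτδ₀)).congr fun τ' => ?_
        rw [← smul_sub]
        congr 1
        abel)
      inner
    calc p ((g s t - g 0 t - (g s 0 - g 0 0)) - t • s • w)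
        = p ((fun τ => g s τ - g 0 τ) t - (fun τ => g s τ - g 0 τ) 0 - t • s • w) := rfl
      _ ≤ ε / 2 * |s| * |t| := houter
  have h1 : Tendsto (fun s : ℝ => s⁻¹ • (g s t - g 0 t)) (𝓝[≠] 0) (𝓝 (gs 0 t)) :=
    (hGs 0 t (hδle 0 h0δ) htδ₀).congr fun σ => by rw [zero_add]
  have h2 : Tendsto (fun s : ℝ => s⁻¹ • (g s 0 - g 0 0)) (𝓝[≠] 0) (𝓝 (gs 0 0)) :=
    (hGs 0 0 (hδle 0 h0δ) (hδle 0 h0δ)).congr fun σ => by rw [zero_add]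
  have hlim : Tendsto (fun s : ℝ => s⁻¹ • (g s t - g 0 t) - s⁻¹ • (g s 0 - g 0 0))
      (𝓝[≠] 0) (𝓝 (gs 0 t - gs 0 0)) := h1.sub h2
  have hΦ : Continuous fun v : E => p (t⁻¹ • v - w) :=
    hp.comp ((continuous_const_smul t⁻¹).sub continuous_const)
  have hφ := (hΦ.tendsto _).comp hlim
  refine le_of_tendsto hφ ?_
  filter_upwards [self_mem_nhdsWithin, hsmall] with s (hs0 : s ≠ 0) (hsδ : |s| < δ)
  show p (t⁻¹ • (s⁻¹ • (g s t - g 0 t) - s⁻¹ • (g s 0 - g 0 0)) - w) ≤ ε / 2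
  have hts : t * s ≠ 0 := mul_ne_zero ht0 hs0
  have heq : t⁻¹ • (s⁻¹ • (g s t - g 0 t) - s⁻¹ • (g s 0 - g 0 0)) - w
      = (t * s)⁻¹ • ((g s t - g 0 t - (g s 0 - g 0 0)) - t • s • w) := by
    match_scalars <;> field_simp
  rw [heq, map_smul_eq_mul, Real.norm_eq_abs]
  have hkey := key s hsδ
  have hta : |t| ≠ 0 := abs_ne_zero.2 ht0
  have hsa : |s| ≠ 0 := abs_ne_zero.2 hs0
  calc |(t * s)⁻¹| * p ((g s t - g 0 t - (g s 0 - g 0 0)) - t • s • w)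
      ≤ |(t * s)⁻¹| * (ε / 2 * |s| * |t|) :=
        mul_le_mul_of_nonneg_left hkey (abs_nonneg _)
    _ = ε / 2 := by
        rw [abs_inv, abs_mul]
        field_simp

end Auxiliary

/-- The set of continuous one-parameter subgroups `γ : (ℝ,+) → G`, as a subtype of `C(ℝ, G)`
(hence endowed with the compact-open topology). -/
abbrev OneParam (G : Type*) [TopologicalSpace G] [Group G] : Type _ :=
  {γ : C(ℝ, G) // ∀ s t : ℝ, γ (s + t) = γ s * γ t}

/-- `D_γ f(x) = v`, i.e. `(1/t)(f(x·γ(t)) − f(x)) → v` as `t → 0`. -/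
def HasDirDeriv {G E : Type*} [TopologicalSpace G] [Group G]
    [AddCommGroup E] [Module ℝ E] [TopologicalSpace E]
    (f : G → E) (x : G) (γ : OneParam G) (v : E) : Prop :=
  Tendsto (fun t : ℝ => t⁻¹ • (f (x * γ.1 t) - f x)) (𝓝[≠] (0 : ℝ)) (𝓝 v)

/-- If `f : U × V → E` is `C^{1,1}` (with partial derivative maps `d10 = d^{(1,0)}f`,
`d01 = d^{(0,1)}f` and `d11 = d^{(1,1)}f`), then for all `(x,y) ∈ U × V`, `γ ∈ 𝔏(G)`, `η ∈ 𝔏(H)`,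
the iterated derivative `(D_{(0,η)}D_{(γ,0)}f)(x,y)` exists and equals
`(D_{(γ,0)}D_{(0,η)}f)(x,y) = d11 x y γ η`. -/
theorem schwarz_C11
    {G H E : Type*} [Group G] [TopologicalSpace G] [IsTopologicalGroup G]
    [Group H] [TopologicalSpace H] [IsTopologicalGroup H]
    [AddCommGroup E] [Module ℝ E] [TopologicalSpace E] [IsTopologicalAddGroup E]
    [ContinuousSMul ℝ E] [LocallyConvexSpace ℝ E] [T2Space E]
    (U : Set G) (V : Set H) (hU : IsOpen U) (hV : IsOpen V)
    (f : G → H → E)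
    (d10 : G → H → OneParam G → E) (d01 : G → H → OneParam H → E)
    (d11 : G → H → OneParam G → OneParam H → E)
    -- `f` is continuous on `U × V`:
    (hf : ContinuousOn (fun p : G × H => f p.1 p.2) (U ×ˢ V))
    -- `f` is `C^{1,0}` with partial derivative `d10`:
    (hd10 : ∀ x ∈ U, ∀ y ∈ V, ∀ γ : OneParam G,
      HasDirDeriv (fun x' => f x' y) x γ (d10 x y γ))
    (hd10c : ContinuousOn (fun p : G × H × OneParam G => d10 p.1 p.2.1 p.2.2)
      (U ×ˢ V ×ˢ (univ : Set (OneParam G))))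
    -- `f` is `C^{0,1}` with partial derivative `d01`:
    (hd01 : ∀ x ∈ U, ∀ y ∈ V, ∀ η : OneParam H,
      HasDirDeriv (f x) y η (d01 x y η))
    (hd01c : ContinuousOn (fun p : G × H × OneParam H => d01 p.1 p.2.1 p.2.2)
      (U ×ˢ V ×ˢ (univ : Set (OneParam H))))
    -- `(D_{(γ,0)}D_{(0,η)}f)(x,y)` exists and equals `d11 x y γ η`, continuously:
    (hd11 : ∀ x ∈ U, ∀ y ∈ V, ∀ (γ : OneParam G) (η : OneParam H),
      HasDirDeriv (fun x' => d01 x' y η) x γ (d11 x y γ η))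
    (hd11c : ContinuousOn
      (fun p : G × H × OneParam G × OneParam H => d11 p.1 p.2.1 p.2.2.1 p.2.2.2)
      (U ×ˢ V ×ˢ (univ : Set (OneParam G × OneParam H)))) :
    ∀ x ∈ U, ∀ y ∈ V, ∀ (γ : OneParam G) (η : OneParam H),
      HasDirDeriv (fun y' => d10 x y' γ) y η (d11 x y γ η) := by
  intro x hx y hy γ η
  have hγ0 : γ.1 0 = 1 := by
    have h2 : γ.1 0 * γ.1 0 = γ.1 0 * 1 := by
      rw [mul_one]
      simpa using (γ.2 0 0).symm
    exact mul_left_cancel h2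
  have hη0 : η.1 0 = 1 := by
    have h2 : η.1 0 * η.1 0 = η.1 0 * 1 := by
      rw [mul_one]
      simpa using (η.2 0 0).symm
    exact mul_left_cancel h2
  have hUev : ∀ᶠ s : ℝ in 𝓝 0, x * γ.1 s ∈ U := by
    have hc : Tendsto (fun s : ℝ => x * γ.1 s) (𝓝 0) (𝓝 x) := by
      have hc0 : Continuous fun s : ℝ => x * γ.1 s := continuous_const.mul γ.1.continuous
      have := hc0.tendsto 0
      rwa [hγ0, mul_one] at this
    exact hc (hU.mem_nhds hx)
  have hVev : ∀ᶠ t : ℝ in 𝓝 0, y * η.1 t ∈ V := by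
    have hc : Tendsto (fun t : ℝ => y * η.1 t) (𝓝 0) (𝓝 y) := by
      have hc0 : Continuous fun t : ℝ => y * η.1 t := continuous_const.mul η.1.continuous
      have := hc0.tendsto 0
      rwa [hη0, mul_one] at this
    exact hc (hV.mem_nhds hy)
  rcases Metric.eventually_nhds_iff_ball.mp hUev with ⟨δa, hδa, hU'⟩
  rcases Metric.eventually_nhds_iff_ball.mp hVev with ⟨δb, hδb, hV'⟩
  have hδ₀ : 0 < min δa δb := lt_min hδa hδb
  have hmemU : ∀ s : ℝ, |s| < min δa δb → x * γ.1 s ∈ U := fun s hs =>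
    hU' s (by
      rw [Metric.mem_ball, Real.dist_eq, sub_zero]
      exact hs.trans_le (min_le_left _ _))
  have hmemV : ∀ t : ℝ, |t| < min δa δb → y * η.1 t ∈ V := fun t ht =>
    hV' t (by
      rw [Metric.mem_ball, Real.dist_eq, sub_zero]
      exact ht.trans_le (min_le_right _ _))
  have main := real_schwarz (E := E)
    (g := fun s t => f (x * γ.1 s) (y * η.1 t))
    (gs := fun s t => d10 (x * γ.1 s) (y * η.1 t) γ)
    (gt := fun s t => d01 (x * γ.1 s) (y * η.1 t) η)
    (gts := fun s t => d11 (x * γ.1 s) (y * η.1 t) γ η)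
    hδ₀
    (fun s t hs ht =>
      (hd10 _ (hmemU s hs) _ (hmemV t ht) γ).congr fun σ => by
        simp only [γ.2, mul_assoc])
    (fun s t hs ht =>
      (hd01 _ (hmemU s hs) _ (hmemV t ht) η).congr fun τ => by
        simp only [η.2, mul_assoc])
    (fun s t hs ht =>
      (hd11 _ (hmemU s hs) _ (hmemV t ht) γ η).congr fun σ => by
        simp only [γ.2, mul_assoc])
    (by
      have hopen : IsOpen (U ×ˢ V ×ˢ (univ : Set (OneParam G × OneParam H))) :=
        hU.prod (hV.prod isOpen_univ)
      have h1 : ContinuousAt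
          (fun p : G × H × OneParam G × OneParam H => d11 p.1 p.2.1 p.2.2.1 p.2.2.2)
          (x * γ.1 0, y * η.1 0, γ, η) := by
        refine hd11c.continuousAt (hopen.mem_nhds ?_)
        simp [hγ0, hη0, hx, hy]
      have h2 : ContinuousAt
          (fun q : ℝ × ℝ => ((x * γ.1 q.1, y * η.1 q.2, γ, η) : G × H × OneParam G × OneParam H))
          (0, 0) := by
        apply Continuous.continuousAt
        exact (continuous_const.mul (γ.1.continuous.comp continuous_fst)).prodMk
          ((continuous_const.mul (η.1.continuous.comp continuous_snd)).prodMk continuous_const)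
      have h3 := ContinuousAt.comp
        (f := fun q : ℝ × ℝ => ((x * γ.1 q.1, y * η.1 q.2, γ, η) :
          G × H × OneParam G × OneParam H))
        (x := ((0:ℝ), (0:ℝ))) h1 h2
      exact h3)
  simp only [hγ0, hη0, mul_one] at main
  exact main
end

section
/- Let G and H be topological groups, U ⊆ G and V ⊆ H open subsets, and E a locally convex space. A map f : U × V → E is C^{1,1} if and only if the flipped map g : V × U → E, g(y,x) := f(x,y), is C^{1,1} (with the roles of G and H interchanged). In this case d^{(1,0)}g(y,x,η) = d^{(0,1)}f(x,y,η), d^{(0,1)}g(y,x,γ) = d^{(1,0)}f(x,y,γ), and d^{(1,1)}g(y,x,η,γ) = d^{(1,1)}f(x,y,γ,η) for all x ∈ U, y ∈ V, γ ∈ 𝔏(G), η ∈ 𝔏(H). -/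
open Filter Topology Set

/-- `f : U × V → E` is `C^{1,1}` with partial derivative maps `d10 = d^{(1,0)}f`,
`d01 = d^{(0,1)}f` and `d11 = d^{(1,1)}f` (where `d11 x y γ η = (D_{(γ,0)}D_{(0,η)}f)(x,y)`). -/
def IsC11 {G H E : Type*} [TopologicalSpace G] [Group G] [TopologicalSpace H] [Group H]
    [AddCommGroup E] [Module ℝ E] [TopologicalSpace E]
    (f : G → H → E) (U : Set G) (V : Set H)
    (d10 : G → H → OneParam G → E) (d01 : G → H → OneParam H → E)
    (d11 : G → H → OneParam G → OneParam H → E) : Prop :=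
  ContinuousOn (fun p : G × H => f p.1 p.2) (U ×ˢ V) ∧
  (∀ x ∈ U, ∀ y ∈ V, ∀ γ : OneParam G, HasDirDeriv (fun x' => f x' y) x γ (d10 x y γ)) ∧
  ContinuousOn (fun p : G × H × OneParam G => d10 p.1 p.2.1 p.2.2)
    (U ×ˢ V ×ˢ (univ : Set (OneParam G))) ∧
  (∀ x ∈ U, ∀ y ∈ V, ∀ η : OneParam H, HasDirDeriv (f x) y η (d01 x y η)) ∧
  ContinuousOn (fun p : G × H × OneParam H => d01 p.1 p.2.1 p.2.2)
    (U ×ˢ V ×ˢ (univ : Set (OneParam H))) ∧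
  (∀ x ∈ U, ∀ y ∈ V, ∀ (γ : OneParam G) (η : OneParam H),
    HasDirDeriv (fun x' => d01 x' y η) x γ (d11 x y γ η)) ∧
  ContinuousOn (fun p : G × H × OneParam G × OneParam H => d11 p.1 p.2.1 p.2.2.1 p.2.2.2)
    (U ×ˢ V ×ˢ (univ : Set (OneParam G × OneParam H)))

lemma hasDerivAt_of_tendsto_quot (φ : ℝ → ℝ) (σ c : ℝ)
    (h : Tendsto (fun r : ℝ => r⁻¹ * (φ (σ + r) - φ σ)) (𝓝[≠] (0:ℝ)) (𝓝 c)) :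
    HasDerivAt φ c σ := by
  rw [hasDerivAt_iff_tendsto_slope]
  have hmap : Tendsto (fun y : ℝ => y - σ) (𝓝[≠] σ) (𝓝[≠] (0:ℝ)) := by
    rw [tendsto_nhdsWithin_iff]
    refine ⟨?_, ?_⟩
    · have h1 : Tendsto (fun y : ℝ => y - σ) (𝓝 σ) (𝓝 (σ - σ)) :=
        (continuous_id.sub continuous_const).tendsto σ
      rw [sub_self] at h1
      exact h1.mono_left nhdsWithin_le_nhds
    · filter_upwards [self_mem_nhdsWithin] with y hy
      simpa [sub_ne_zero] using hy
  have h2 := h.comp hmap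
  apply h2.congr
  intro y
  simp [Function.comp, slope_def_field, div_eq_inv_mul]

lemma mvt_mem {E : Type*} [AddCommGroup E] [Module ℝ E] [TopologicalSpace E]
    [IsTopologicalAddGroup E] [ContinuousSMul ℝ E] [LocallyConvexSpace ℝ E]
    (h h' : ℝ → E) (t : ℝ) (ht : t ≠ 0)
    (hc : ContinuousOn h (uIcc 0 t))
    (hd : ∀ σ ∈ Ioo (min 0 t) (max 0 t),
      Tendsto (fun r : ℝ => r⁻¹ • (h (σ + r) - h σ)) (𝓝[≠] (0:ℝ)) (𝓝 (h' σ)))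
    (C : Set E) (hconv : Convex ℝ C) (hclosed : IsClosed C)
    (hmem : ∀ σ ∈ Ioo (min 0 t) (max 0 t), h' σ ∈ C) :
    t⁻¹ • (h t - h 0) ∈ C := by
  by_contra hq
  obtain ⟨T, u, hTq, hTC⟩ := geometric_hahn_banach_point_closed hconv hclosed hq
  set a := min 0 t with ha
  set b := max 0 t with hb
  have hab : a < b := by
    rcases lt_or_gt_of_ne ht with h1 | h1
    · simp [ha, hb, min_eq_right h1.le, max_eq_left h1.le, h1]
    · simp [ha, hb, min_eq_left h1.le, max_eq_right h1.le, h1]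
  have huIcc : uIcc 0 t = Icc a b := rfl
  have hcont : ContinuousOn (fun σ => T (h σ)) (Icc a b) := by
    rw [← huIcc]; exact T.continuous.comp_continuousOn hc
  have hder : ∀ σ ∈ Ioo a b, HasDerivAt (fun σ => T (h σ)) (T (h' σ)) σ := by
    intro σ hσ
    apply hasDerivAt_of_tendsto_quot
    have h3 := (T.continuous.tendsto (h' σ)).comp (hd σ hσ)
    apply h3.congr
    intro r
    simp [Function.comp, map_sub, map_smul, smul_eq_mul]
  obtain ⟨c, hcmem, hceq⟩ := exists_hasDerivAt_eq_slope _ _ hab hcont hder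
  have key : T (h' c) = T (t⁻¹ • (h t - h 0)) := by
    rw [hceq, map_smul, map_sub, smul_eq_mul]
    rcases lt_or_gt_of_ne ht with h1 | h1
    · have : a = t ∧ b = 0 := ⟨min_eq_right h1.le, max_eq_left h1.le⟩
      rw [this.1, this.2]
      rw [zero_sub, div_neg, ← neg_div, neg_sub, div_eq_inv_mul]
    · have : a = 0 ∧ b = t := ⟨min_eq_left h1.le, max_eq_right h1.le⟩
      rw [this.1, this.2]
      rw [sub_zero, div_eq_inv_mul]
  have := hTC _ (hmem c hcmem)
  rw [key] at this
  linarith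

lemma exists_closed_convex_nhds {E : Type*} [AddCommGroup E] [Module ℝ E] [TopologicalSpace E]
    [IsTopologicalAddGroup E] [ContinuousSMul ℝ E] [LocallyConvexSpace ℝ E]
    (W : Set E) (hW : W ∈ 𝓝 (0:E)) :
    ∃ N ∈ 𝓝 (0:E), Convex ℝ N ∧ IsClosed N ∧ N ⊆ W := by
  obtain ⟨W₁, hW₁n, hW₁c, hW₁sub⟩ := exists_mem_nhds_isClosed_subset hW
  obtain ⟨N₀, ⟨hN₀n, hN₀conv⟩, hN₀sub⟩ :=
    (LocallyConvexSpace.convex_basis (𝕜 := ℝ) (0:E)).mem_iff.mp hW₁n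
  exact ⟨closure N₀, mem_of_superset hN₀n subset_closure, hN₀conv.closure, isClosed_closure,
    (closure_minimal hN₀sub hW₁c).trans hW₁sub⟩

lemma oneParam_zero {G : Type*} [TopologicalSpace G] [Group G] (γ : OneParam G) : γ.1 0 = 1 := by
  have h := γ.2 0 0
  rw [add_zero] at h
  exact (mul_left_cancel (h.symm.trans (mul_one _).symm))

lemma mem_uIcc_zero_abs {s σ : ℝ} (h : σ ∈ uIcc 0 s) : |σ| ≤ |s| := by
  rcases le_total 0 s with hs | hs
  · rw [uIcc_of_le hs] at h; rw [abs_of_nonneg h.1, abs_of_nonneg hs]; exact h.2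
  · rw [uIcc_of_ge hs] at h; rw [abs_of_nonpos h.2, abs_of_nonpos hs]; linarith [h.1]

lemma schwarz {G H E : Type*} [Group G] [TopologicalSpace G] [IsTopologicalGroup G]
    [Group H] [TopologicalSpace H] [IsTopologicalGroup H]
    [AddCommGroup E] [Module ℝ E] [TopologicalSpace E] [IsTopologicalAddGroup E]
    [ContinuousSMul ℝ E] [LocallyConvexSpace ℝ E]
    {U : Set G} {V : Set H} (hU : IsOpen U) (hV : IsOpen V)
    {f : G → H → E} {d10 : G → H → OneParam G → E} {d01 : G → H → OneParam H → E}
    {d11 : G → H → OneParam G → OneParam H → E}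
    (hf : IsC11 f U V d10 d01 d11)
    {x : G} (hx : x ∈ U) {y : H} (hy : y ∈ V) (γ : OneParam G) (η : OneParam H) :
    HasDirDeriv (fun y' => d10 x y' γ) y η (d11 x y γ η) := by
  obtain ⟨hfc, hd10, hd10c, hd01, hd01c, hd11, hd11c⟩ := hf
  show Tendsto (fun t : ℝ => t⁻¹ • (d10 x (y * η.1 t) γ - d10 x y γ)) (𝓝[≠] (0:ℝ))
    (𝓝 (d11 x y γ η))
  set L := d11 x y γ η with hL
  rw [tendsto_def]
  intro W hW
  -- closed convex neighborhood of 0 shifted to L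
  have hW0 : (fun z : E => L + z) ⁻¹' W ∈ 𝓝 (0:E) :=
    (continuous_const.add continuous_id).continuousAt.preimage_mem_nhds (by simpa using hW)
  obtain ⟨N, hNn, hNconv, hNcl, hNsub⟩ := exists_closed_convex_nhds _ hW0
  set C : Set E := (fun z : E => z - L) ⁻¹' N with hC
  have hCconv : Convex ℝ C := by
    intro z1 h1 z2 h2 p q hp hq hpq
    have key : (p • z1 + q • z2) - L = p • (z1 - L) + q • (z2 - L) := by
      rw [smul_sub, smul_sub, sub_add_sub_comm, Convex.combo_self hpq]
    show (p • z1 + q • z2) - L ∈ N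
    rw [key]
    exact hNconv h1 h2 hp hq hpq
  have hCcl : IsClosed C := hNcl.preimage (continuous_id.sub continuous_const)
  have hCW : C ⊆ W := by
    intro z hz
    have := hNsub hz
    simpa using this
  have hCnhds : C ∈ 𝓝 L :=
    (continuous_id.sub continuous_const).continuousAt.preimage_mem_nhds (by simpa [← hL] using hNn)
  -- choose δ
  have hxcont : Continuous (fun σ : ℝ => x * γ.1 σ) := continuous_const.mul γ.1.continuous
  have hycont : Continuous (fun τ : ℝ => y * η.1 τ) := continuous_const.mul η.1.continuous
  have hx0 : x * γ.1 0 = x := by rw [oneParam_zero, mul_one]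
  have hy0 : y * η.1 0 = y := by rw [oneParam_zero, mul_one]
  have hδ1 : ∃ δ > 0, ∀ σ : ℝ, |σ| ≤ δ → x * γ.1 σ ∈ U := by
    have hp : (fun σ : ℝ => x * γ.1 σ) ⁻¹' U ∈ 𝓝 (0:ℝ) :=
      hxcont.continuousAt.preimage_mem_nhds (by rw [hx0]; exact hU.mem_nhds hx)
    obtain ⟨ε, hε, hball⟩ := Metric.mem_nhds_iff.mp hp
    refine ⟨ε/2, by linarith, fun σ hσ => hball ?_⟩
    rw [Metric.mem_ball, Real.dist_eq, sub_zero]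
    linarith
  have hδ2 : ∃ δ > 0, ∀ τ : ℝ, |τ| ≤ δ → y * η.1 τ ∈ V := by
    have hp : (fun τ : ℝ => y * η.1 τ) ⁻¹' V ∈ 𝓝 (0:ℝ) :=
      hycont.continuousAt.preimage_mem_nhds (by rw [hy0]; exact hV.mem_nhds hy)
    obtain ⟨ε, hε, hball⟩ := Metric.mem_nhds_iff.mp hp
    refine ⟨ε/2, by linarith, fun τ hτ => hball ?_⟩
    rw [Metric.mem_ball, Real.dist_eq, sub_zero]
    linarith
  have hδ3 : ∃ δ > 0, ∀ σ τ : ℝ, |σ| ≤ δ → |τ| ≤ δ →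
      d11 (x * γ.1 σ) (y * η.1 τ) γ η ∈ C := by
    have hmapc : Continuous (fun p : ℝ × ℝ =>
        ((x * γ.1 p.1 : G), ((y * η.1 p.2 : H), ((γ, η) : OneParam G × OneParam H)))) :=
      (continuous_const.mul (γ.1.continuous.comp continuous_fst)).prodMk
        ((continuous_const.mul (η.1.continuous.comp continuous_snd)).prodMk continuous_const)
    have hopen : IsOpen (U ×ˢ V ×ˢ (univ : Set (OneParam G × OneParam H))) :=
      hU.prod (hV.prod isOpen_univ)
    have hat : ContinuousAt (fun p : G × H × OneParam G × OneParam H =>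
        d11 p.1 p.2.1 p.2.2.1 p.2.2.2) (x * γ.1 0, y * η.1 0, γ, η) :=
      hd11c.continuousAt (hopen.mem_nhds (by rw [hx0, hy0]; exact ⟨hx, hy, trivial⟩))
    have hΦ : ContinuousAt (fun p : ℝ × ℝ => d11 (x * γ.1 p.1) (y * η.1 p.2) γ η) (0, 0) :=
      ContinuousAt.comp (f := fun p : ℝ × ℝ =>
          ((x * γ.1 p.1 : G), ((y * η.1 p.2 : H), ((γ, η) : OneParam G × OneParam H))))
        (g := fun p : G × H × OneParam G × OneParam H => d11 p.1 p.2.1 p.2.2.1 p.2.2.2)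
        hat hmapc.continuousAt
    have hp : (fun p : ℝ × ℝ => d11 (x * γ.1 p.1) (y * η.1 p.2) γ η) ⁻¹' C ∈ 𝓝 ((0:ℝ), (0:ℝ)) :=
      hΦ.preimage_mem_nhds (by rw [hx0, hy0]; exact hCnhds)
    obtain ⟨ε, hε, hball⟩ := Metric.mem_nhds_iff.mp hp
    refine ⟨ε/2, by linarith, fun σ τ hσ hτ => ?_⟩
    have hb : ((σ, τ) : ℝ × ℝ) ∈ Metric.ball ((0:ℝ), (0:ℝ)) ε := by
      rw [Metric.mem_ball, Prod.dist_eq]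
      apply max_lt <;> (rw [Real.dist_eq, sub_zero]; linarith)
    exact hball hb
  obtain ⟨δ1, hδ1p, hUδ⟩ := hδ1
  obtain ⟨δ2, hδ2p, hVδ⟩ := hδ2
  obtain ⟨δ3, hδ3p, hd11δ⟩ := hδ3
  set δ := min δ1 (min δ2 δ3) with hδdef
  have hδp : 0 < δ := lt_min hδ1p (lt_min hδ2p hδ3p)
  have hδU : ∀ σ : ℝ, |σ| ≤ δ → x * γ.1 σ ∈ U := fun σ hσ =>
    hUδ σ (hσ.trans (min_le_left _ _))
  have hδV : ∀ τ : ℝ, |τ| ≤ δ → y * η.1 τ ∈ V := fun τ hτ =>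
    hVδ τ (hτ.trans ((min_le_right _ _).trans (min_le_left _ _)))
  have hδ11 : ∀ σ τ : ℝ, |σ| ≤ δ → |τ| ≤ δ → d11 (x * γ.1 σ) (y * η.1 τ) γ η ∈ C :=
    fun σ τ hσ hτ => hd11δ σ τ (hσ.trans ((min_le_right _ _).trans (min_le_right _ _)))
      (hτ.trans ((min_le_right _ _).trans (min_le_right _ _)))
  -- the main estimate
  have main : ∀ t : ℝ, t ≠ 0 → |t| ≤ δ →
      t⁻¹ • (d10 x (y * η.1 t) γ - d10 x y γ) ∈ C := by
    intro t ht hδt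
    have hyt : y * η.1 t ∈ V := hδV t hδt
    -- B s → A t
    have hBtend : Tendsto (fun s : ℝ => s⁻¹ • (t⁻¹ •
        ((f (x * γ.1 s) (y * η.1 t) - f x (y * η.1 t)) - (f (x * γ.1 s) y - f x y))))
        (𝓝[≠] (0:ℝ)) (𝓝 (t⁻¹ • (d10 x (y * η.1 t) γ - d10 x y γ))) := by
      have T1 := hd10 x hx (y * η.1 t) hyt γ
      have T2 := hd10 x hx y hy γ
      have T3 := (T1.sub T2).const_smul t⁻¹
      apply T3.congr
      intro s
      rw [← smul_sub, smul_comm]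
    refine hCcl.mem_of_tendsto hBtend ?_
    have hev1 : ∀ᶠ s in 𝓝[≠] (0:ℝ), |s| ≤ δ := by
      apply eventually_nhdsWithin_of_eventually_nhds
      filter_upwards [Icc_mem_nhds (by linarith : -δ < (0:ℝ)) hδp] with s hs
      exact abs_le.mpr hs
    filter_upwards [hev1, self_mem_nhdsWithin] with s hsδ hs0
    simp only [mem_compl_iff, mem_singleton_iff] at hs0
    -- inner step
    have inner : ∀ τ : ℝ, |τ| ≤ δ →
        s⁻¹ • (d01 (x * γ.1 s) (y * η.1 τ) η - d01 x (y * η.1 τ) η) ∈ C := by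
      intro τ hτδ
      have hyτ : y * η.1 τ ∈ V := hδV τ hτδ
      have := mvt_mem (fun σ => d01 (x * γ.1 σ) (y * η.1 τ) η)
        (fun σ => d11 (x * γ.1 σ) (y * η.1 τ) γ η) s hs0
        (by
          exact ContinuousOn.comp (g := fun p : G × H × OneParam H => d01 p.1 p.2.1 p.2.2)
            (f := fun σ : ℝ => ((x * γ.1 σ : G), ((y * η.1 τ : H), η)))
            hd01c
            (Continuous.continuousOn ((continuous_const.mul γ.1.continuous).prodMk
              (continuous_const.prodMk continuous_const)))
            (fun σ hσ => ⟨hδU σ ((mem_uIcc_zero_abs hσ).trans hsδ), hyτ, trivial⟩))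
        (by
          intro σ hσ
          have hσδ : |σ| ≤ δ :=
            (mem_uIcc_zero_abs (Ioo_subset_Icc_self hσ)).trans hsδ
          have hD := hd11 (x * γ.1 σ) (hδU σ hσδ) (y * η.1 τ) hyτ γ η
          apply hD.congr
          intro r
          simp only [γ.2, mul_assoc])
        C hCconv hCcl
        (by
          intro σ hσ
          have hσδ : |σ| ≤ δ :=
            (mem_uIcc_zero_abs (Ioo_subset_Icc_self hσ)).trans hsδ
          exact hδ11 σ τ hσδ hτδ)
      simp only [oneParam_zero γ, mul_one] at this
      exact this
    -- outer step
    set C' : Set E := (fun z : E => s⁻¹ • z) ⁻¹' C with hC'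
    have hC'conv : Convex ℝ C' := hCconv.linear_preimage (LinearMap.lsmul ℝ E s⁻¹)
    have hC'cl : IsClosed C' := hCcl.preimage (continuous_const_smul _)
    have houter := mvt_mem
      (fun τ => f (x * γ.1 s) (y * η.1 τ) - f x (y * η.1 τ))
      (fun τ => d01 (x * γ.1 s) (y * η.1 τ) η - d01 x (y * η.1 τ) η) t ht
      (by
        have hc1 : ContinuousOn (fun τ : ℝ => f (x * γ.1 s) (y * η.1 τ)) (uIcc 0 t) :=
          ContinuousOn.comp (g := fun p : G × H => f p.1 p.2)
            (f := fun τ : ℝ => ((x * γ.1 s : G), (y * η.1 τ : H))) hfc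
            (Continuous.continuousOn
              (continuous_const.prodMk (continuous_const.mul η.1.continuous)))
            (fun τ hτ => ⟨hδU s hsδ, hδV τ ((mem_uIcc_zero_abs hτ).trans hδt)⟩)
        have hc2 : ContinuousOn (fun τ : ℝ => f x (y * η.1 τ)) (uIcc 0 t) :=
          ContinuousOn.comp (g := fun p : G × H => f p.1 p.2)
            (f := fun τ : ℝ => ((x : G), (y * η.1 τ : H))) hfc
            (Continuous.continuousOn
              (continuous_const.prodMk (continuous_const.mul η.1.continuous)))
            (fun τ hτ => ⟨hx, hδV τ ((mem_uIcc_zero_abs hτ).trans hδt)⟩)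
        exact hc1.sub hc2)
      (by
        intro τ hτ
        have hτδ : |τ| ≤ δ := (mem_uIcc_zero_abs (Ioo_subset_Icc_self hτ)).trans hδt
        have hyτ : y * η.1 τ ∈ V := hδV τ hτδ
        have D1 := hd01 (x * γ.1 s) (hδU s hsδ) (y * η.1 τ) hyτ η
        have D2 := hd01 x hx (y * η.1 τ) hyτ η
        have D3 := D1.sub D2
        apply D3.congr
        intro r
        simp only [η.2, mul_assoc, ← smul_sub]
        congr 1
        abel)
      C' hC'conv hC'cl
      (by
        intro τ hτ
        have hτδ : |τ| ≤ δ := (mem_uIcc_zero_abs (Ioo_subset_Icc_self hτ)).trans hδt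
        exact inner τ hτδ)
    simp only [oneParam_zero η, mul_one] at houter
    have : s⁻¹ • (t⁻¹ • ((f (x * γ.1 s) (y * η.1 t) - f x (y * η.1 t)) -
        (f (x * γ.1 s) y - f x y))) ∈ C := houter
    exact this
  -- conclude
  have hev : {t : ℝ | |t| ≤ δ} ∩ {(0:ℝ)}ᶜ ∈ 𝓝[≠] (0:ℝ) := by
    apply inter_mem _ self_mem_nhdsWithin
    apply eventually_nhdsWithin_of_eventually_nhds
    filter_upwards [Icc_mem_nhds (by linarith : -δ < (0:ℝ)) hδp] with s hs
    exact abs_le.mpr hs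
  apply mem_of_superset hev
  rintro t ⟨htδ, ht0⟩
  simp only [mem_compl_iff, mem_singleton_iff] at ht0
  exact hCW (main t ht0 htδ)

lemma isC11_flip {G H E : Type*} [Group G] [TopologicalSpace G] [IsTopologicalGroup G]
    [Group H] [TopologicalSpace H] [IsTopologicalGroup H]
    [AddCommGroup E] [Module ℝ E] [TopologicalSpace E] [IsTopologicalAddGroup E]
    [ContinuousSMul ℝ E] [LocallyConvexSpace ℝ E]
    {U : Set G} {V : Set H} (hU : IsOpen U) (hV : IsOpen V)
    {f : G → H → E} {d10 : G → H → OneParam G → E} {d01 : G → H → OneParam H → E}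
    {d11 : G → H → OneParam G → OneParam H → E}
    (hf : IsC11 f U V d10 d01 d11) :
    IsC11 (fun y x => f x y) V U (fun y x η => d01 x y η) (fun y x γ => d10 x y γ)
      (fun y x η γ => d11 x y γ η) := by
  obtain ⟨hfc, hd10, hd10c, hd01, hd01c, hd11, hd11c⟩ := hf
  refine ⟨?_, ?_, ?_, ?_, ?_, ?_, ?_⟩
  · exact ContinuousOn.comp (g := fun p : G × H => f p.1 p.2)
      (f := fun p : H × G => ((p.2 : G), (p.1 : H))) hfc
      (continuous_snd.prodMk continuous_fst).continuousOn
      (fun p hp => ⟨hp.2, hp.1⟩)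
  · intro y hy x hx η
    exact hd01 x hx y hy η
  · exact ContinuousOn.comp (g := fun p : G × H × OneParam H => d01 p.1 p.2.1 p.2.2)
      (f := fun p : H × G × OneParam H => ((p.2.1 : G), ((p.1 : H), p.2.2))) hd01c
      ((continuous_fst.comp continuous_snd).prodMk
        (continuous_fst.prodMk (continuous_snd.comp continuous_snd))).continuousOn
      (fun p hp => ⟨hp.2.1, hp.1, trivial⟩)
  · intro y hy x hx γ
    exact hd10 x hx y hy γ
  · exact ContinuousOn.comp (g := fun p : G × H × OneParam G => d10 p.1 p.2.1 p.2.2)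
      (f := fun p : H × G × OneParam G => ((p.2.1 : G), ((p.1 : H), p.2.2))) hd10c
      ((continuous_fst.comp continuous_snd).prodMk
        (continuous_fst.prodMk (continuous_snd.comp continuous_snd))).continuousOn
      (fun p hp => ⟨hp.2.1, hp.1, trivial⟩)
  · intro y hy x hx η γ
    exact schwarz hU hV ⟨hfc, hd10, hd10c, hd01, hd01c, hd11, hd11c⟩ hx hy γ η
  · exact ContinuousOn.comp
      (g := fun p : G × H × OneParam G × OneParam H => d11 p.1 p.2.1 p.2.2.1 p.2.2.2)
      (f := fun p : H × G × OneParam H × OneParam G =>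
        ((p.2.1 : G), ((p.1 : H), (p.2.2.2, p.2.2.1)))) hd11c
      ((continuous_fst.comp continuous_snd).prodMk
        (continuous_fst.prodMk
          ((continuous_snd.comp (continuous_snd.comp continuous_snd)).prodMk
            (continuous_fst.comp (continuous_snd.comp continuous_snd))))).continuousOn
      (fun p hp => ⟨hp.2.1, hp.1, trivial⟩)

/-- `f : U × V → E` is `C^{1,1}` if and only if the flipped map
`g(y,x) := f(x,y)` is `C^{1,1}` (with the roles of `G` and `H` interchanged); in this case
`d^{(1,0)}g(y,x,η) = d^{(0,1)}f(x,y,η)`, `d^{(0,1)}g(y,x,γ) = d^{(1,0)}f(x,y,γ)` and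
`d^{(1,1)}g(y,x,η,γ) = d^{(1,1)}f(x,y,γ,η)` on `U × V`. -/
theorem isC11_flip_iff
    {G H E : Type*} [Group G] [TopologicalSpace G] [IsTopologicalGroup G]
    [Group H] [TopologicalSpace H] [IsTopologicalGroup H]
    [AddCommGroup E] [Module ℝ E] [TopologicalSpace E] [IsTopologicalAddGroup E]
    [ContinuousSMul ℝ E] [LocallyConvexSpace ℝ E] [T2Space E]
    (U : Set G) (V : Set H) (hU : IsOpen U) (hV : IsOpen V)
    (f : G → H → E) :
    ((∃ d10 d01 d11, IsC11 f U V d10 d01 d11) ↔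
      (∃ e10 e01 e11, IsC11 (fun y x => f x y) V U e10 e01 e11)) ∧
    (∀ d10 d01 d11 e10 e01 e11, IsC11 f U V d10 d01 d11 →
      IsC11 (fun y x => f x y) V U e10 e01 e11 →
      ∀ x ∈ U, ∀ y ∈ V, ∀ (γ : OneParam G) (η : OneParam H),
        e10 y x η = d01 x y η ∧ e01 y x γ = d10 x y γ ∧ e11 y x η γ = d11 x y γ η) := by
  constructor
  · constructor
    · rintro ⟨d10, d01, d11, hf⟩
      exact ⟨_, _, _, isC11_flip hU hV hf⟩
    · rintro ⟨e10, e01, e11, hg⟩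
      exact ⟨_, _, _, isC11_flip hV hU hg⟩
  · intro d10 d01 d11 e10 e01 e11 hf hg x hx y hy γ η
    have hpt : ∀ y' ∈ V, e01 y' x γ = d10 x y' γ := fun y' hy' =>
      tendsto_nhds_unique (hg.2.2.2.1 y' hy' x hx γ) (hf.2.1 x hx y' hy' γ)
    refine ⟨?_, ?_, ?_⟩
    · exact tendsto_nhds_unique (hg.2.1 y hy x hx η) (hf.2.2.2.1 x hx y hy η)
    · exact hpt y hy
    · have h5 : HasDirDeriv (fun y' => e01 y' x γ) y η (e11 y x η γ) :=
        hg.2.2.2.2.2.1 y hy x hx η γ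
      have h6 : HasDirDeriv (fun y' => d10 x y' γ) y η (d11 x y γ η) :=
        schwarz hU hV hf hx hy γ η
      have hev : ∀ᶠ r in 𝓝[≠] (0:ℝ), y * η.1 r ∈ V := by
        have hc : ContinuousAt (fun r : ℝ => y * η.1 r) 0 :=
          (continuous_const.mul η.1.continuous).continuousAt
        have := hc.eventually_mem (by rw [oneParam_zero, mul_one]; exact hV.mem_nhds hy)
        exact this.filter_mono nhdsWithin_le_nhds
      have h5' : Tendsto (fun r : ℝ => r⁻¹ • (d10 x (y * η.1 r) γ - d10 x y γ))
          (𝓝[≠] (0:ℝ)) (𝓝 (e11 y x η γ)) := by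
        apply Filter.Tendsto.congr' _ h5
        filter_upwards [hev] with r hr
        rw [hpt _ hr, hpt y hy]
      exact tendsto_nhds_unique h5' h6
end

section
/- Let X be a Hausdorff topological space, H a topological group, V ⊆ H open, and E a locally convex space. If f : X × V → E is a C^{0,1}-map, then for each x ∈ X the map f^∨(x) := f(x,·) : V → E is C¹ with d(f^∨(x))(y,η) = d^{(0,1)}f(x,y,η) for all y ∈ V, η ∈ 𝔏(H); moreover, the maps X → C(V,E), x ↦ f(x,·), and X → C(V × 𝔏(H), E), x ↦ d^{(0,1)}f(x,·,·), are continuous, where the function spaces carry the compact-open topology. -/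
open Filter Topology Set

/-- If `f : X × V → E` is `C^{0,1}` (with `X` a Hausdorff topological space,
`V ⊆ H` open, and partial derivative map `d01 = d^{(0,1)}f`), then for each `x ∈ X` the map
`f^∨(x) = f(x,·) : V → E` is `C¹` with `d(f^∨(x))(y,η) = d^{(0,1)}f(x,y,η)`; moreover the maps
`X → C(V,E)`, `x ↦ f(x,·)`, and `X → C(V × 𝔏(H), E)`, `x ↦ d^{(0,1)}f(x,·,·)`, are continuous
(the function spaces carrying the compact-open topology). -/
theorem slice_isC1_and_vee_continuous_of_isC01
    {X H E : Type*} [TopologicalSpace X] [T2Space X]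
    [Group H] [TopologicalSpace H] [IsTopologicalGroup H]
    [AddCommGroup E] [Module ℝ E] [TopologicalSpace E] [IsTopologicalAddGroup E]
    [ContinuousSMul ℝ E] [LocallyConvexSpace ℝ E] [T2Space E]
    (V : Set H) (hV : IsOpen V) (f : X → H → E) (d01 : X → H → OneParam H → E)
    (hf : ContinuousOn (fun p : X × H => f p.1 p.2) ((univ : Set X) ×ˢ V))
    (hd : ∀ (x : X), ∀ y ∈ V, ∀ η : OneParam H, HasDirDeriv (f x) y η (d01 x y η))
    (hdc : ContinuousOn (fun p : X × H × OneParam H => d01 p.1 p.2.1 p.2.2)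
      ((univ : Set X) ×ˢ V ×ˢ (univ : Set (OneParam H)))) :
    (∀ x : X,
      ContinuousOn (f x) V ∧
      (∀ y ∈ V, ∀ η : OneParam H, HasDirDeriv (f x) y η (d01 x y η)) ∧
      ContinuousOn (fun p : H × OneParam H => d01 x p.1 p.2)
        (V ×ˢ (univ : Set (OneParam H)))) ∧
    (∀ Fv : X → C(↥V, E), (∀ (x : X) (y : ↥V), Fv x y = f x y.1) → Continuous Fv) ∧
    (∀ Dv : X → C(↥V × OneParam H, E),
      (∀ (x : X) (p : ↥V × OneParam H), Dv x p = d01 x p.1.1 p.2) → Continuous Dv) := by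
  refine ⟨fun x => ⟨?_, hd x, ?_⟩, fun Fv hFv => ?_, fun Dv hDv => ?_⟩
  · exact fun y hy => ((hf (x, y) ⟨mem_univ _, hy⟩).comp
      (continuousWithinAt_const.prodMk continuousWithinAt_id)
      (fun z hz => ⟨mem_univ _, hz⟩))
  · exact fun p hp => ((hdc (x, p) ⟨mem_univ _, hp⟩).comp
      (continuousWithinAt_const.prodMk continuousWithinAt_id)
      (fun z hz => ⟨mem_univ _, hz⟩))
  · have hcont : Continuous fun q : X × ↥V => f q.1 q.2.1 :=
      hf.comp_continuous (continuous_fst.prodMk (continuous_subtype_val.comp continuous_snd))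
         (fun q => ⟨mem_univ _, q.2.2⟩)
    have h : ∀ x, Fv x = ContinuousMap.mk (fun y : ↥V => f x y.1)
        (hcont.comp (Continuous.prodMk_right x)) := by
      intro x; ext y; exact hFv x y
    rw [funext h]
    exact ContinuousMap.continuous_of_continuous_uncurry _ hcont
  · have hcont : Continuous fun q : X × (↥V × OneParam H) => d01 q.1 q.2.1.1 q.2.2 :=
      hdc.comp_continuous (continuous_fst.prodMk
        (((continuous_subtype_val.comp continuous_fst).prodMk continuous_snd).comp
          continuous_snd))
         (fun q => ⟨mem_univ _, q.2.1.2, mem_univ _⟩)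
    have h : ∀ x, Dv x = ContinuousMap.mk (fun p : ↥V × OneParam H => d01 x p.1.1 p.2)
        (hcont.comp (Continuous.prodMk_right x)) := by
      intro x; ext p; exact hDv x p
    rw [funext h]
    exact ContinuousMap.continuous_of_continuous_uncurry _ hcont
end

section
/- Let G be a topological group, U ⊆ G open, V a locally compact Hausdorff topological space, and E a locally convex space. If g : U → C(V,E) is a C¹-map into the space C(V,E) of continuous maps with the compact-open topology, then the map g^∧ : U × V → E, (x,y) ↦ g(x)(y), is C^{1,0}, with d^{(1,0)}(g^∧)(x,y,γ) = (dg(x,γ))(y) for all x ∈ U, y ∈ V, γ ∈ 𝔏(G). -/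
open Filter Topology Set

/-- If `V` is a locally compact Hausdorff topological space and
`g : U → C(V,E)` is `C¹` (with derivative map `dg`) into `C(V,E)` with the compact-open
topology, then `g^∧ : U × V → E`, `(x,y) ↦ g(x)(y)`, is `C^{1,0}`, with
`d^{(1,0)}(g^∧)(x,y,γ) = dg(x,γ)(y)`. -/
theorem wedge_isC10_of_isC1
    {G V E : Type*} [Group G] [TopologicalSpace G] [IsTopologicalGroup G]
    [TopologicalSpace V] [T2Space V] [LocallyCompactSpace V]
    [AddCommGroup E] [Module ℝ E] [TopologicalSpace E] [IsTopologicalAddGroup E]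
    [ContinuousSMul ℝ E] [LocallyConvexSpace ℝ E] [T2Space E]
    (U : Set G) (hU : IsOpen U) (g : G → C(V, E)) (dg : G → OneParam G → C(V, E))
    (hg : ContinuousOn g U)
    (hdg : ∀ x ∈ U, ∀ γ : OneParam G, HasDirDeriv g x γ (dg x γ))
    (hdgc : ContinuousOn (fun p : G × OneParam G => dg p.1 p.2)
      (U ×ˢ (univ : Set (OneParam G)))) :
    ContinuousOn (fun p : G × V => g p.1 p.2) (U ×ˢ (univ : Set V)) ∧
    (∀ x ∈ U, ∀ (y : V) (γ : OneParam G),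
      HasDirDeriv (fun x' => g x' y) x γ (dg x γ y)) ∧
    ContinuousOn (fun p : G × V × OneParam G => dg p.1 p.2.2 p.2.1)
      (U ×ˢ (univ : Set (V × OneParam G))) := by
  refine ⟨?_, ?_, ?_⟩
  · have h1 : ContinuousOn (fun p : G × V => ((g p.1 : C(V, E)), p.2)) (U ×ˢ univ) :=
      (hg.comp continuousOn_fst fun p hp => hp.1).prodMk continuous_snd.continuousOn
    exact continuous_eval.comp_continuousOn h1
  · intro x hx y γ
    have h := ((continuous_eval_const y).tendsto (dg x γ)).comp (hdg x hx γ)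
    simpa [HasDirDeriv, Function.comp_def] using h
  · have h1 : ContinuousOn (fun p : G × V × OneParam G =>
        ((dg p.1 p.2.2 : C(V, E)), p.2.1)) (U ×ˢ univ) := by
      refine ContinuousOn.prodMk ?_ continuous_snd.fst.continuousOn
      exact hdgc.comp (continuousOn_fst.prodMk continuous_snd.snd.continuousOn)
        fun p hp => ⟨hp.1, trivial⟩
    exact continuous_eval.comp_continuousOn h1
end

section
/- Let G be a topological group, P a Hausdorff topological space, E and F real normed spaces, U ⊆ G open, V ⊆ E open, f : U × P → E a C^{1,0}-map with f(U × P) ⊆ V, and g : V → F a map which is continuously differentiable on V (i.e. g is Fréchet differentiable at every point of V and its derivative Dg : V → L(E,F) is continuous). Then g ∘ f : U × P → F is C^{1,0}, and d^{(1,0)}(g ∘ f)(x,p,γ) = Dg(f(x,p))(d^{(1,0)}f(x,p,γ)) for all x ∈ U, p ∈ P, γ ∈ 𝔏(G). -/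
open Filter Topology Set

/-- Let `f : U × P → E` be `C^{1,0}` (with `P` a Hausdorff space,
partial derivative map `d10`) with `f(U × P) ⊆ V`, and let `g : V → F` be continuously
(Fréchet) differentiable on the open set `V ⊆ E` with derivative `Dg`. Then
`g ∘ f : U × P → F` is `C^{1,0}`, with
`d^{(1,0)}(g ∘ f)(x,p,γ) = Dg(f(x,p))(d^{(1,0)}f(x,p,γ))`. -/
theorem comp_frechet_isC10
    {G P E F : Type*} [Group G] [TopologicalSpace G] [IsTopologicalGroup G]
    [TopologicalSpace P] [T2Space P]
    [NormedAddCommGroup E] [NormedSpace ℝ E] [NormedAddCommGroup F] [NormedSpace ℝ F]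
    (U : Set G) (hU : IsOpen U) (V : Set E) (hV : IsOpen V)
    (f : G → P → E) (d10 : G → P → OneParam G → E)
    (hfV : ∀ x ∈ U, ∀ p : P, f x p ∈ V)
    (hf : ContinuousOn (fun q : G × P => f q.1 q.2) (U ×ˢ (univ : Set P)))
    (hd : ∀ x ∈ U, ∀ (p : P) (γ : OneParam G),
      HasDirDeriv (fun x' => f x' p) x γ (d10 x p γ))
    (hdc : ContinuousOn (fun q : G × P × OneParam G => d10 q.1 q.2.1 q.2.2)
      (U ×ˢ (univ : Set (P × OneParam G))))
    (g : E → F) (Dg : E → E →L[ℝ] F)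
    (hg : ∀ e ∈ V, HasFDerivAt g (Dg e) e) (hDg : ContinuousOn Dg V) :
    ContinuousOn (fun q : G × P => g (f q.1 q.2)) (U ×ˢ (univ : Set P)) ∧
    (∀ x ∈ U, ∀ (p : P) (γ : OneParam G),
      HasDirDeriv (fun x' => g (f x' p)) x γ (Dg (f x p) (d10 x p γ))) ∧
    ContinuousOn (fun q : G × P × OneParam G => Dg (f q.1 q.2.1) (d10 q.1 q.2.1 q.2.2))
      (U ×ˢ (univ : Set (P × OneParam G))) := by

  have hγ0 : ∀ γ : OneParam G, γ.1 0 = 1 := by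
    intro γ
    have h := γ.2 0 0
    rw [add_zero] at h
    exact (mul_left_cancel (a := γ.1 0) (by rw [mul_one]; exact h)).symm
  have hgc : ContinuousOn g V := fun e he => (hg e he).continuousAt.continuousWithinAt
  have hmaps : MapsTo (fun q : G × P => f q.1 q.2) (U ×ˢ (univ : Set P)) V :=
    fun q hq => hfV q.1 hq.1 q.2
  refine ⟨hgc.comp hf hmaps, ?_, ?_⟩
  · intro x hx p γ
    set c : ℝ → E := fun t => f (x * γ.1 t) p with hc
    have hc0 : c 0 = f x p := by simp [hc, hγ0 γ]
    have hder : HasDerivAt c (d10 x p γ) 0 := by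
      rw [hasDerivAt_iff_tendsto_slope]
      have h := hd x hx p γ
      unfold HasDirDeriv at h
      convert h using 2 with t
      simp [slope, hc0, hc, hγ0 γ]
    have hgd : HasDerivAt (fun t => g (c t)) (Dg (f x p) (d10 x p γ)) 0 := by
      have hgF : HasFDerivAt g (Dg (f x p)) (c 0) := hc0 ▸ hg (f x p) (hfV x hx p)
      exact hgF.comp_hasDerivAt 0 hder
    rw [HasDirDeriv]
    have h2 := hasDerivAt_iff_tendsto_slope.mp hgd
    convert h2 using 2 with t
    simp [slope, hc0, hc, hγ0 γ]
  · have hproj : ContinuousOn (fun q : G × P × OneParam G => f q.1 q.2.1)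
        (U ×ˢ (univ : Set (P × OneParam G))) := by
      apply hf.comp (continuous_fst.prodMk (continuous_fst.comp continuous_snd)).continuousOn
      exact fun q hq => ⟨hq.1, mem_univ _⟩
    have hA : ContinuousOn (fun q : G × P × OneParam G => Dg (f q.1 q.2.1))
        (U ×ˢ (univ : Set (P × OneParam G))) :=
      hDg.comp hproj (fun q hq => hfV q.1 hq.1 q.2.1)
    exact isBoundedBilinearMap_apply.continuous.comp_continuousOn (hA.prodMk hdc)
end
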